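/- Let T = (V,E) be a tree on d ≥ 3 vertices with edge correlations ρ : E → (−1,1)∖{0}, and let T′ = (V′,E′) be a subtree of T with at least 3 vertices (V′ ⊆ V, E′ the set of edges of T with both endpoints in V′, and T′ connected), with the edge correlations inherited from T. Then the approximate error exponent for the smaller tree is at least that of the larger tree: K̃(T′) ≥ K̃(T). -/

import Mathlib

open SimpleGraph

noncomputable def Jt (a b : ℝ) : ℝ :=
  ((1 / 2) * Real.log ((1 - b ^ 2) / (1 - a ^ 2))) ^ 2 /
    (2 * (b ^ 4 + b ^ 2) / (1 - b ^ 2) ^ 2 + 2 * (a ^ 4 + a ^ 2) / (1 - a ^ 2) ^ 2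
      - 4 * b ^ 2 * (a ^ 2 + 1) / ((1 - b ^ 2) * (1 - a ^ 2)))

/-- The approximate error exponent K̃(G,ρ): the infimum of J̃(ρ_e, ρ_{e′}) over all
non-edges e′ = {u,v} and all edges e on the (unique) path joining u and v, where the
correlation of the non-edge is the product of the edge correlations along that path. -/
noncomputable def Ktilde {V : Type*} (G : SimpleGraph V) (ρ : Sym2 V → ℝ) : ℝ :=
  sInf { x : ℝ | ∃ (u v : V) (p : G.Walk u v), p.IsPath ∧ u ≠ v ∧ ¬ G.Adj u v ∧
    ∃ e ∈ p.edges, x = Jt (ρ e) ((p.edges.map ρ).prod) }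

/-- The approximate error exponent of a (connected, induced) subtree on at least 3 vertices,
with inherited edge correlations, is at least that of the full tree. -/
theorem Ktilde_subtree {V : Type*} [Fintype V] (hd : 3 ≤ Fintype.card V)
    (G : SimpleGraph V) (hG : G.IsTree) (ρ : Sym2 V → ℝ)
    (hρ : ∀ e ∈ G.edgeSet, ρ e ∈ Set.Ioo (-1 : ℝ) 1 ∧ ρ e ≠ 0)
    (s : Set V) (hs : 3 ≤ Nat.card s) (hconn : (G.induce s).Connected) :
    Ktilde G ρ ≤ Ktilde (G.induce s) (fun e => ρ (e.map Subtype.val)) := by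
  classical
  set ι : G.induce s ↪g G := SimpleGraph.Embedding.induce s with hι
  have hac : (G.induce s).IsAcyclic := by
    intro v c hc
    exact hG.IsAcyclic (c.map ι.toHom) (hc.map ι.injective)
  apply csInf_le_csInf
  · apply Set.Finite.bddBelow
    apply Set.Finite.subset (Set.finite_range
      (fun q : (Σ u v : V, G.Path u v) × Sym2 V =>
        Jt (ρ q.2) ((q.1.2.2.1.edges.map ρ).prod)))
    rintro x ⟨u, v, p, hp, -, -, e, he, rfl⟩
    exact ⟨⟨⟨u, v, ⟨p, hp⟩⟩, e⟩, rfl⟩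
  · have hcard : 3 ≤ Fintype.card s := by rwa [Nat.card_eq_fintype_card] at hs
    obtain ⟨a, b, hab⟩ := Fintype.exists_pair_of_one_lt_card (α := s) (by omega)
    have hc3 : ∃ c : s, c ≠ a ∧ c ≠ b := by
      by_contra h
      push_neg at h
      have hsub : (Finset.univ : Finset s) ⊆ {a, b} := by
        intro c _
        simp only [Finset.mem_insert, Finset.mem_singleton]
        by_cases hca : c = a
        · exact Or.inl hca
        · exact Or.inr (h c hca)
      have h2 : ({a, b} : Finset s).card ≤ 2 :=
        (Finset.card_insert_le _ _).trans (by simp)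
      have h3 := (Finset.card_le_card hsub).trans h2
      rw [Finset.card_univ] at h3
      omega
    obtain ⟨c, hca, hcb⟩ := hc3
    have hnon : ∃ u v : s, u ≠ v ∧ ¬ (G.induce s).Adj u v := by
      by_contra h
      push_neg at h
      have hAB : (G.induce s).Adj a b := h a b hab
      have hBC : (G.induce s).Adj b c := h b c (fun hh => hcb hh.symm)
      have hCA : (G.induce s).Adj c a := h c a hca
      refine hac (Walk.cons hAB (Walk.cons hBC (Walk.cons hCA Walk.nil))) ?_
      rw [Walk.isCycle_def]
      refine ⟨?_, by simp, ?_⟩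
      · rw [Walk.isTrail_def]
        simp only [Walk.edges_cons, Walk.edges_nil, List.nodup_cons, List.mem_cons,
          List.not_mem_nil, or_false, List.mem_singleton, List.nodup_nil, and_true,
          Sym2.eq_iff]
        refine ⟨?_, ?_⟩ <;> · push_neg; tauto
      · simp only [Walk.support_cons, Walk.support_nil, List.tail_cons, List.nodup_cons,
          List.mem_cons, List.not_mem_nil, or_false, List.mem_singleton, List.nodup_nil,
          and_true]
        push_neg
        tauto
    obtain ⟨u, v, huv, hnadj⟩ := hnon
    obtain ⟨w⟩ := hconn.preconnected u v
    set p := w.toPath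
    have hne : p.1.edges ≠ [] := by
      intro hnil
      have : p.1.length = 0 := by
        have := congrArg List.length hnil
        simpa [Walk.length_edges] using this
      exact huv ((Walk.nil_iff_length_eq.mpr this).eq)
    obtain ⟨e, he⟩ := List.exists_mem_of_ne_nil _ hne
    exact ⟨_, u, v, p.1, p.2, huv, hnadj, e, he, rfl⟩
  · rintro x ⟨u, v, p, hp, huv, hadj, e, he, rfl⟩
    refine ⟨u, v, p.map ι.toHom, Walk.map_isPath_of_injective ι.injective hp,
      ?_, ?_, e.map Subtype.val, ?_, ?_⟩
    · exact fun h => huv (Subtype.ext h)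
    · exact hadj
    · erw [Walk.edges_map]
      exact List.mem_map_of_mem he
    · erw [Walk.edges_map]; rw [List.map_map]
      rfl
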